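/- Let (Ω, F, (F_t)_{t≥0}, P) be a filtered probability space and (Ω, F̃, (F̃_t)_{t≥0}, P̃) its N-augmentation. Assume that for every coherent family of probability measures (Q_t)_{t≥0} with Q_t defined on F_t, there exists a unique probability measure Q on F coinciding with Q_t on F_t for all t ≥ 0. Then for every coherent family of probability measures (Q̃_t)_{t≥0} such that Q̃_t is defined on F̃_t and is absolutely continuous with respect to the restriction of P̃ to F̃_t, there exists a unique probability measure Q̃ on F̃ coinciding with Q̃_t on F̃_t for all t ≥ 0. -/

import Mathlib

open MeasureTheory Set Filter
open scoped NNReal ENNReal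

variable {Ω : Type*}

/-- A set `A` is N-negligible with respect to the filtration `𝓕` and the set function `P`
(the outer-measure attached to a probability measure): it is covered by countably many
sets `B n` with `B n ∈ 𝓕 n` and `P (B n) = 0`. -/
def NNegligible (𝓕 : ℝ≥0 → MeasurableSpace Ω) (P : Set Ω → ℝ≥0∞) (A : Set Ω) : Prop :=
  ∃ B : ℕ → Set Ω, (∀ n : ℕ, MeasurableSet[𝓕 (n : ℝ≥0)] (B n)) ∧
    (∀ n : ℕ, P (B n) = 0) ∧ A ⊆ ⋃ n, B n

/-- If every coherent family of probability measures on the filtration `(𝓕 t)` extends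
uniquely to `F`, then every coherent family of probability measures on the N-augmented
filtration `(F̃ₜ)` that is locally absolutely continuous with respect to `P̃` extends
uniquely to `F̃`. -/
private lemma isCaratheodory_of_null' {α : Type*} (m : MeasureTheory.OuterMeasure α) {s : Set α}
    (hs : m s = 0) : MeasurableSet[m.caratheodory] s := by
  rw [MeasureTheory.OuterMeasure.isCaratheodory_iff_le]
  intro t
  have h1 : m (t ∩ s) = 0 :=
    le_antisymm (hs ▸ m.mono Set.inter_subset_right) zero_le
  rw [h1, zero_add]
  exact m.mono Set.diff_subset

theorem n_augmentation_extension
    (F : MeasurableSpace Ω) (𝓕 : ℝ≥0 → MeasurableSpace Ω)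
    (h_mono : Monotone 𝓕) (h_le : ∀ t, 𝓕 t ≤ F)
    (P : @Measure Ω F) (hP : @IsProbabilityMeasure Ω F P)
    (𝓝neg : Set (Set Ω)) (h𝓝 : 𝓝neg = {A | NNegligible 𝓕 (fun s => P s) A})
    (Ftil : MeasurableSpace Ω)
    (hFtil : Ftil = MeasurableSpace.generateFrom ({A | MeasurableSet[F] A} ∪ 𝓝neg))
    (𝓕til : ℝ≥0 → MeasurableSpace Ω)
    (h𝓕til : ∀ t : ℝ≥0, 𝓕til t =
      MeasurableSpace.generateFrom
        ({A | MeasurableSet[⨅ u ∈ Set.Ioi t, 𝓕 u] A} ∪ 𝓝neg))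
    (Ptil : @Measure Ω Ftil)
    (hPtil : ∀ A : Set Ω, MeasurableSet[F] A → Ptil A = P A)
    (hext : ∀ Q : (t : ℝ≥0) → @Measure Ω (𝓕 t),
      (∀ t : ℝ≥0, @IsProbabilityMeasure Ω (𝓕 t) (Q t)) →
      (∀ s t : ℝ≥0, s ≤ t → ∀ A : Set Ω, MeasurableSet[𝓕 s] A → Q t A = Q s A) →
      ∃! Qq : @Measure Ω F, ∀ t : ℝ≥0, ∀ A : Set Ω,
        MeasurableSet[𝓕 t] A → Qq A = Q t A) :
    ∀ Qt : (t : ℝ≥0) → @Measure Ω (𝓕til t),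
      (∀ t : ℝ≥0, @IsProbabilityMeasure Ω (𝓕til t) (Qt t)) →
      (∀ s t : ℝ≥0, s ≤ t → ∀ A : Set Ω, MeasurableSet[𝓕til s] A → Qt t A = Qt s A) →
      (∀ t : ℝ≥0, ∀ A : Set Ω, MeasurableSet[𝓕til t] A → Ptil A = 0 → Qt t A = 0) →
      ∃! Qq : @Measure Ω Ftil, ∀ t : ℝ≥0, ∀ A : Set Ω,
        MeasurableSet[𝓕til t] A → Qq A = Qt t A := by
  intro Qt hQtProb hQtCoh hQtAC
  -- helper for applying ≤ of measurable spaces to sets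
  have mle : ∀ {m1 m2 : MeasurableSpace Ω}, m1 ≤ m2 → ∀ {s : Set Ω},
      MeasurableSet[m1] s → MeasurableSet[m2] s := fun h _ hs => h _ hs
  -- 𝓝neg is closed under subsets
  have hNsub : ∀ {A B : Set Ω}, A ⊆ B → B ∈ 𝓝neg → A ∈ 𝓝neg := by
    intro A B hAB hB
    rw [h𝓝] at hB ⊢
    obtain ⟨C, h1, h2, h3⟩ := hB
    exact ⟨C, h1, h2, hAB.trans h3⟩
  -- π-systems
  have hpi : ∀ m : MeasurableSpace Ω,
      IsPiSystem ({A | MeasurableSet[m] A} ∪ 𝓝neg) := by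
    intro m s hs t ht _
    rcases hs with hs | hs
    · rcases ht with ht | ht
      · exact Or.inl (hs.inter ht)
      · exact Or.inr (hNsub Set.inter_subset_right ht)
    · exact Or.inr (hNsub Set.inter_subset_left hs)
  -- inclusions of σ-algebras
  have hiInf_le : ∀ t : ℝ≥0, (⨅ u ∈ Set.Ioi t, 𝓕 u) ≤ 𝓕 (t + 1) :=
    fun t => iInf₂_le (t + 1) (Set.mem_Ioi.mpr (lt_add_of_pos_right t one_pos))
  have le_t : ∀ t : ℝ≥0, 𝓕 t ≤ 𝓕til t := by
    intro t
    have h1 : 𝓕 t ≤ ⨅ u ∈ Set.Ioi t, 𝓕 u :=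
      le_iInf fun u => le_iInf fun hu => h_mono (le_of_lt hu)
    rw [h𝓕til t]
    intro s hs
    exact MeasurableSpace.measurableSet_generateFrom (Or.inl (h1 _ hs))
  have leF : F ≤ Ftil := by
    rw [hFtil]
    intro s hs
    exact MeasurableSpace.measurableSet_generateFrom (Or.inl hs)
  have leN : ∀ A ∈ 𝓝neg, MeasurableSet[Ftil] A := by
    intro A hA
    rw [hFtil]
    exact MeasurableSpace.measurableSet_generateFrom (Or.inr hA)
  have leNt : ∀ t : ℝ≥0, ∀ A ∈ 𝓝neg, MeasurableSet[𝓕til t] A := by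
    intro t A hA
    rw [h𝓕til t]
    exact MeasurableSpace.measurableSet_generateFrom (Or.inr hA)
  have le_tF : ∀ t : ℝ≥0, 𝓕til t ≤ Ftil := by
    intro t
    rw [h𝓕til t]
    refine MeasurableSpace.generateFrom_le ?_
    rintro s (hs | hs)
    · exact mle leF (mle (h_le (t + 1)) (mle (hiInf_le t) hs))
    · exact leN s hs
  -- negligible sets are Ptil-null
  have hPtil0 : ∀ A ∈ 𝓝neg, Ptil A = 0 := by
    intro A hA
    rw [h𝓝] at hA
    obtain ⟨B, hBm, hB0, hBs⟩ := hA
    have hB : ∀ n : ℕ, Ptil (B n) = 0 := by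
      intro n
      rw [hPtil _ (mle (h_le _) (hBm n))]
      exact hB0 n
    refine le_antisymm ?_ zero_le
    calc Ptil A ≤ Ptil (⋃ n, B n) := measure_mono hBs
      _ ≤ ∑' n, Ptil (B n) := measure_iUnion_le B
      _ = 0 := by simp [hB]
  -- the restricted coherent family on (𝓕 t)
  set Q' : (t : ℝ≥0) → @Measure Ω (𝓕 t) := fun t => (Qt t).trim (le_t t) with hQ'def
  have hQ'prob : ∀ t : ℝ≥0, @IsProbabilityMeasure Ω (𝓕 t) (Q' t) := by
    intro t
    constructor
    rw [hQ'def, trim_measurableSet_eq _ (@MeasurableSet.univ Ω (𝓕 t))]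
    exact (hQtProb t).measure_univ
  have hQ'coh : ∀ s t : ℝ≥0, s ≤ t → ∀ A : Set Ω, MeasurableSet[𝓕 s] A →
      Q' t A = Q' s A := by
    intro s t hst A hA
    rw [hQ'def, trim_measurableSet_eq _ (mle (h_mono hst) hA),
      trim_measurableSet_eq _ hA]
    exact hQtCoh s t hst A (mle (le_t s) hA)
  obtain ⟨Q, hQprop, hQuniq⟩ := hext Q' hQ'prob hQ'coh
  have hQ : ∀ t : ℝ≥0, ∀ A : Set Ω, MeasurableSet[𝓕 t] A → Q A = Qt t A := by
    intro t A hA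
    rw [hQprop t A hA, hQ'def, trim_measurableSet_eq _ hA]
  have hQuniv : Q Set.univ = 1 := by
    rw [hQ 0 Set.univ (@MeasurableSet.univ Ω (𝓕 0))]
    exact (hQtProb 0).measure_univ
  -- Q vanishes (as an outer measure) on negligible sets; same for any solution
  have hnull : ∀ (mm : MeasurableSpace Ω) (R : @Measure Ω mm),
      (∀ n : ℕ, ∀ A : Set Ω, MeasurableSet[𝓕 (n : ℝ≥0)] A → R A = Qt (n : ℝ≥0) A) →
      ∀ A ∈ 𝓝neg, R A = 0 := by
    intro mm R hR A hA
    rw [h𝓝] at hA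
    obtain ⟨B, hBm, hB0, hBs⟩ := hA
    have hB : ∀ n : ℕ, R (B n) = 0 := by
      intro n
      rw [hR n (B n) (hBm n)]
      refine hQtAC _ _ (mle (le_t _) (hBm n)) ?_
      rw [hPtil _ (mle (h_le _) (hBm n))]
      exact hB0 n
    refine le_antisymm ?_ zero_le
    calc R A ≤ R (⋃ n, B n) := measure_mono hBs
      _ ≤ ∑' n, R (B n) := measure_iUnion_le B
      _ = 0 := by simp [hB]
  have hQ0 : ∀ A ∈ 𝓝neg, Q A = 0 :=
    hnull F Q (fun n A hA => hQ _ A hA)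
  -- construct Qtil via the Carathéodory construction
  have hcar : Ftil ≤ (@Measure.toOuterMeasure Ω F Q).caratheodory := by
    rw [hFtil]
    refine MeasurableSpace.generateFrom_le ?_
    rintro s (hs | hs)
    · exact @le_toOuterMeasure_caratheodory Ω F Q _ hs
    · exact isCaratheodory_of_null' _ (by rw [@Measure.toOuterMeasure_apply Ω F Q _]; exact hQ0 s hs)
  set Qtil : @Measure Ω Ftil := @OuterMeasure.toMeasure Ω Ftil (@Measure.toOuterMeasure Ω F Q) hcar
    with hQtildef
  have hQtilF : ∀ A : Set Ω, MeasurableSet[F] A → Qtil A = Q A := by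
    intro A hA
    rw [hQtildef, @toMeasure_apply Ω Ftil (@Measure.toOuterMeasure Ω F Q) hcar A (mle leF hA),
      @Measure.toOuterMeasure_apply Ω F Q _]
  have hQtilN : ∀ A ∈ 𝓝neg, Qtil A = 0 := by
    intro A hA
    rw [hQtildef, @toMeasure_apply Ω Ftil (@Measure.toOuterMeasure Ω F Q) hcar A (leN A hA),
      @Measure.toOuterMeasure_apply Ω F Q _]
    exact hQ0 A hA
  have hQtiluniv : Qtil Set.univ = 1 := by
    rw [hQtilF Set.univ (@MeasurableSet.univ Ω F), hQuniv]
  -- existence: Qtil agrees with Qt t on 𝓕til t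
  have hagree : ∀ t : ℝ≥0, ∀ A : Set Ω, MeasurableSet[𝓕til t] A → Qtil A = Qt t A := by
    intro t A hA
    have hfin : @IsFiniteMeasure Ω (𝓕til t) (Qtil.trim (le_tF t)) := by
      constructor
      rw [trim_measurableSet_eq _ (@MeasurableSet.univ Ω (𝓕til t)), hQtiluniv]
      exact ENNReal.one_lt_top
    have key : Qtil.trim (le_tF t) = Qt t := by
      refine @ext_of_generate_finite Ω (𝓕til t) (Qtil.trim (le_tF t)) (Qt t)
        ({A | MeasurableSet[⨅ u ∈ Set.Ioi t, 𝓕 u] A} ∪ 𝓝neg) (h𝓕til t) (hpi _) hfin ?_ ?_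
      · rintro s (hs | hs)
        · have hs1 : MeasurableSet[𝓕 (t + 1)] s := mle (hiInf_le t) hs
          have hs2 : MeasurableSet[𝓕til t] s := by
            rw [h𝓕til t]; exact MeasurableSpace.measurableSet_generateFrom (Or.inl hs)
          rw [trim_measurableSet_eq _ hs2,
            hQtilF s (mle (h_le (t + 1)) hs1), hQ (t + 1) s hs1]
          exact hQtCoh t (t + 1) (le_add_of_nonneg_right zero_le') s hs2
        · rw [trim_measurableSet_eq _ (leNt t s hs), hQtilN s hs]
          exact (hQtAC t s (leNt t s hs) (hPtil0 s hs)).symm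
      · rw [trim_measurableSet_eq _ (@MeasurableSet.univ Ω (𝓕til t)), hQtiluniv,
          (hQtProb t).measure_univ]
    rw [← key, trim_measurableSet_eq _ hA]
  -- uniqueness
  refine ⟨Qtil, hagree, ?_⟩
  intro R hR
  have hRF : ∀ A : Set Ω, MeasurableSet[F] A → R A = Q A := by
    have hRtrim : R.trim leF = Q := by
      refine hQuniq (R.trim leF) ?_
      intro t A hA
      rw [trim_measurableSet_eq _ (mle (h_le t) hA),
        hQ'def, trim_measurableSet_eq _ hA]
      exact hR t A (mle (le_t t) hA)
    intro A hA
    rw [← hRtrim, trim_measurableSet_eq _ hA]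
  have hRuniv : R Set.univ = 1 := by
    rw [hRF Set.univ (@MeasurableSet.univ Ω F), hQuniv]
  have hfinR : @IsFiniteMeasure Ω Ftil R := by
    constructor; rw [hRuniv]; exact ENNReal.one_lt_top
  refine @ext_of_generate_finite Ω Ftil R Qtil
    ({A | MeasurableSet[F] A} ∪ 𝓝neg) hFtil (hpi F) hfinR ?_ ?_
  · rintro s (hs | hs)
    · rw [hRF s hs, hQtilF s hs]
    · rw [hQtilN s hs]
      exact hnull Ftil R (fun n A hA => hR _ A (mle (le_t _) hA)) s hs
  · rw [hRuniv, hQtiluniv]
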